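/- Assume the standing hypotheses, let s = (x,y) ∈ S with s ≠ (0,0) and x·b ≤ y·a (i.e., φ(s) ≤ a/b), let τ = sign(c−a−1) ∈ {−1,0,1}, and let k be a positive integer divisible by a·c. Then the elasticity of k·s = (k·x, k·y) is ρ(k·s) = ( (c·(y·a − x·(b−1))) / (a·(y·c − x·(d−1))) )^τ, an identity of rational numbers (with the integer exponent τ; in particular ρ(k·s) is independent of k). -/
import Mathlib


/-- Standing hypotheses; s = (x,y) ∈ S nonzero with φ(s) ≤ a/b (i.e. x·b ≤ y·a),
τ = sign(c−a−1).  For every positive k divisible by a·c, the elasticity of k·s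
(the ratio of the maximal to the minimal factorization length of (k·x, k·y))
equals ( c·(y·a − x·(b−1)) / (a·(y·c − x·(d−1))) )^τ, independently of k. -/
theorem embdim3_elasticity_of_multiples_low (a b c d : ℕ) (ha : 0 < a)
    (hb : 0 < b) (hc : 0 < c) (hstar : b * c = a * d + 1) (x y : ℕ)
    (hs : (x, y) ∈ AddSubmonoid.closure
        ({((0 : ℕ), (1 : ℕ)), (a, b), (c, d)} : Set (ℕ × ℕ)))
    (hs0 : (x, y) ≠ ((0 : ℕ), (0 : ℕ))) (hxy : x * b ≤ y * a)
    (τ : ℤ) (hτ : τ = Int.sign ((c : ℤ) - a - 1))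
    (L : ℕ → Set ℕ)
    (hL : ∀ k, L k = {ℓ : ℕ | ∃ p q r : ℕ,
      p • ((0 : ℕ), (1 : ℕ)) + q • ((a, b) : ℕ × ℕ) + r • ((c, d) : ℕ × ℕ) =
          (k * x, k * y) ∧ p + q + r = ℓ}) :
    ∀ k : ℕ, 0 < k → a * c ∣ k →
      ((sSup (L k) : ℕ) : ℚ) / ((sInf (L k) : ℕ) : ℚ) =
        ((c : ℚ) * ((y : ℚ) * a - (x : ℚ) * ((b : ℚ) - 1)) /
            ((a : ℚ) * ((y : ℚ) * c - (x : ℚ) * ((d : ℚ) - 1)))) ^ τ := by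
  intro k hk hkd
  obtain ⟨j, hj⟩ := hkd
  have hj0 : 0 < j := by
    rcases Nat.eq_zero_or_pos j with h | h
    · exfalso; rw [h, Nat.mul_zero] at hj; omega
    · exact h
  have hxy0 : ¬ (x = 0 ∧ y = 0) := by
    intro h; exact hs0 (by simp [h.1, h.2])
  -- x*d ≤ y*c
  have hxd : x * d ≤ y * c := by
    have h1 : x * b * c ≤ y * a * c := Nat.mul_le_mul_right c hxy
    nlinarith [h1, hstar, ha]
  set A := y * a + x - x * b with hA
  set C := y * c + x - x * d with hC
  have hxyA : x * b ≤ y * a + x := le_trans hxy (Nat.le_add_right _ _)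
  have hxdC : x * d ≤ y * c + x := le_trans hxd (Nat.le_add_right _ _)
  have hAz : (A : ℤ) = (y : ℤ) * a - (x : ℤ) * ((b : ℤ) - 1) := by
    rw [hA, Nat.cast_sub hxyA]; push_cast; ring
  have hCz : (C : ℤ) = (y : ℤ) * c - (x : ℤ) * ((d : ℤ) - 1) := by
    rw [hC, Nat.cast_sub hxdC]; push_cast; ring
  have hA1 : 1 ≤ A := by
    rcases Nat.eq_zero_or_pos x with hx | hx
    · have hy : 1 ≤ y := by
        rcases Nat.eq_zero_or_pos y with hy | hy
        · exact absurd ⟨hx, hy⟩ hxy0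
        · exact hy
      have : 1 * 1 ≤ y * a := Nat.mul_le_mul hy ha
      calc 1 ≤ y * a := by omega
        _ ≤ y * a + x - x * b := by rw [hx]; simp
    · calc 1 ≤ x := hx
        _ ≤ y * a + x - x * b := by omega
  have hC1 : 1 ≤ C := by
    rcases Nat.eq_zero_or_pos x with hx | hx
    · have hy : 1 ≤ y := by
        rcases Nat.eq_zero_or_pos y with hy | hy
        · exact absurd ⟨hx, hy⟩ hxy0
        · exact hy
      have : 1 * 1 ≤ y * c := Nat.mul_le_mul hy hc
      calc 1 ≤ y * c := by omega
        _ ≤ y * c + x - x * d := by rw [hx]; simp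
    · calc 1 ≤ x := hx
        _ ≤ y * c + x - x * d := by omega
  -- membership characterization
  have hmem : ∀ ℓ : ℕ, ℓ ∈ L k ↔
      ∃ p q r : ℕ, q * a + r * c = k * x ∧ p + q * b + r * d = k * y ∧ p + q + r = ℓ := by
    intro ℓ
    rw [hL]
    simp only [Set.mem_setOf_eq, Prod.smul_mk, smul_eq_mul, Prod.mk_add_mk, Prod.mk.injEq,
      mul_zero, mul_one, zero_add]
    constructor
    · rintro ⟨p, q, r, ⟨h1, h2⟩, h3⟩; exact ⟨p, q, r, h1, h2, h3⟩
    · rintro ⟨p, q, r, h1, h2, h3⟩; exact ⟨p, q, r, ⟨h1, h2⟩, h3⟩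
  -- the two extremal factorizations
  have hMmem : c * j * A ∈ L k := by
    rw [hmem]
    refine ⟨c * j * (y * a - x * b), c * j * x, 0, ?_, ?_, ?_⟩
    · rw [hj]; ring
    · rw [hj]; zify [hxy]; ring
    · rw [hA]; zify [hxy, hxyA]; ring
  have hmmem : a * j * C ∈ L k := by
    rw [hmem]
    refine ⟨a * j * (y * c - x * d), 0, a * j * x, ?_, ?_, ?_⟩
    · rw [hj]; ring
    · rw [hj]; zify [hxd]; ring
    · rw [hC]; zify [hxd, hxdC]; ring
  -- key identities for arbitrary factorizations
  have hbound : ∀ ℓ ∈ L k, ∃ q r : ℕ,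
      (a : ℤ) * ℓ = (a : ℤ) * (c * j * A) - (r : ℤ) * ((c : ℤ) - a - 1) ∧
      (c : ℤ) * ℓ = (c : ℤ) * (a * j * C) + (q : ℤ) * ((c : ℤ) - a - 1) := by
    intro ℓ hℓ
    rw [hmem] at hℓ
    obtain ⟨p, q, r, h1, h2, h3⟩ := hℓ
    refine ⟨q, r, ?_, ?_⟩
    · have h1' : (q : ℤ) * a + r * c = ((a : ℤ) * c * j) * x := by
        exact_mod_cast hj ▸ congrArg (Nat.cast : ℕ → ℤ) h1
      have h2' : (p : ℤ) + q * b + r * d = ((a : ℤ) * c * j) * y := by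
        exact_mod_cast hj ▸ congrArg (Nat.cast : ℕ → ℤ) h2
      have h3' : (p : ℤ) + q + r = (ℓ : ℤ) := by exact_mod_cast h3
      have hst : (b : ℤ) * c = (a : ℤ) * d + 1 := by exact_mod_cast hstar
      push_cast [hAz]
      linear_combination (a : ℤ) * h2' - ((b : ℤ) - 1) * h1' + (r : ℤ) * hst - (a : ℤ) * h3'
    · have h1' : (q : ℤ) * a + r * c = ((a : ℤ) * c * j) * x := by
        exact_mod_cast hj ▸ congrArg (Nat.cast : ℕ → ℤ) h1
      have h2' : (p : ℤ) + q * b + r * d = ((a : ℤ) * c * j) * y := by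
        exact_mod_cast hj ▸ congrArg (Nat.cast : ℕ → ℤ) h2
      have h3' : (p : ℤ) + q + r = (ℓ : ℤ) := by exact_mod_cast h3
      have hst : (b : ℤ) * c = (a : ℤ) * d + 1 := by exact_mod_cast hstar
      push_cast [hCz]
      linear_combination (c : ℤ) * h2' - ((d : ℤ) - 1) * h1' - (q : ℤ) * hst - (c : ℤ) * h3'
  -- cast lemmas for the RHS
  have hAq : (y : ℚ) * a - (x : ℚ) * ((b : ℚ) - 1) = (A : ℚ) := by
    have := hAz
    have : ((A : ℤ) : ℚ) = ((y : ℤ) * a - (x : ℤ) * ((b : ℤ) - 1) : ℤ) := by exact_mod_cast congrArg (Int.cast : ℤ → ℚ) this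
    push_cast at this
    linarith [this]
  have hCq : (y : ℚ) * c - (x : ℚ) * ((d : ℚ) - 1) = (C : ℚ) := by
    have := hCz
    have : ((C : ℤ) : ℚ) = ((y : ℤ) * c - (x : ℤ) * ((d : ℤ) - 1) : ℤ) := by exact_mod_cast congrArg (Int.cast : ℤ → ℚ) this
    push_cast at this
    linarith [this]
  have haq : (0 : ℚ) < a := by exact_mod_cast ha
  have hcq : (0 : ℚ) < c := by exact_mod_cast hc
  have hjq : (0 : ℚ) < j := by exact_mod_cast hj0
  have hAq0 : (0 : ℚ) < A := by exact_mod_cast hA1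
  have hCq0 : (0 : ℚ) < C := by exact_mod_cast hC1
  rcases lt_trichotomy ((c : ℤ) - a - 1) 0 with he | he | he
  · -- τ = -1 : max is a*j*C, min is c*j*A
    have hτ1 : τ = -1 := by rw [hτ, Int.sign_eq_neg_one_iff_neg.mpr he]
    have hG : IsGreatest (L k) (a * j * C) := by
      refine ⟨hmmem, fun ℓ hℓ => ?_⟩
      obtain ⟨q, r, _, h2⟩ := hbound ℓ hℓ
      have hq : (q : ℤ) * ((c : ℤ) - a - 1) ≤ 0 :=
        mul_nonpos_of_nonneg_of_nonpos (Int.ofNat_nonneg q) (le_of_lt he)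
      have : (c : ℤ) * ℓ ≤ (c : ℤ) * (a * j * C) := by linarith [h2, hq]
      have := le_of_mul_le_mul_left this (by exact_mod_cast hc : (0 : ℤ) < c)
      exact_mod_cast this
    have hLst : IsLeast (L k) (c * j * A) := by
      refine ⟨hMmem, fun ℓ hℓ => ?_⟩
      obtain ⟨q, r, h1, _⟩ := hbound ℓ hℓ
      have hr : (r : ℤ) * ((c : ℤ) - a - 1) ≤ 0 :=
        mul_nonpos_of_nonneg_of_nonpos (Int.ofNat_nonneg r) (le_of_lt he)
      have : (a : ℤ) * (c * j * A) ≤ (a : ℤ) * ℓ := by linarith [h1, hr]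
      have := le_of_mul_le_mul_left this (by exact_mod_cast ha : (0 : ℤ) < a)
      exact_mod_cast this
    rw [hG.csSup_eq, hLst.csInf_eq, hτ1, zpow_neg_one, hAq, hCq, inv_div]
    rw [div_eq_div_iff (by positivity) (by positivity)]
    push_cast
    ring
  · -- τ = 0 : all lengths equal
    have hτ1 : τ = 0 := by rw [hτ, he, Int.sign_zero]
    have hall : ∀ ℓ ∈ L k, ℓ = c * j * A := by
      intro ℓ hℓ
      obtain ⟨q, r, h1, _⟩ := hbound ℓ hℓ
      rw [he, mul_zero, sub_zero] at h1
      have := mul_left_cancel₀ (by exact_mod_cast ha.ne' : (a : ℤ) ≠ 0) h1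
      exact_mod_cast this
    have hG : IsGreatest (L k) (c * j * A) := ⟨hMmem, fun ℓ hℓ => le_of_eq (hall ℓ hℓ)⟩
    have hLst : IsLeast (L k) (c * j * A) := ⟨hMmem, fun ℓ hℓ => ge_of_eq (hall ℓ hℓ)⟩
    rw [hG.csSup_eq, hLst.csInf_eq, hτ1, zpow_zero]
    have : ((c * j * A : ℕ) : ℚ) ≠ 0 := by positivity
    exact div_self this
  · -- τ = 1 : max is c*j*A, min is a*j*C
    have hτ1 : τ = 1 := by rw [hτ, Int.sign_eq_one_iff_pos.mpr he]
    have hG : IsGreatest (L k) (c * j * A) := by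
      refine ⟨hMmem, fun ℓ hℓ => ?_⟩
      obtain ⟨q, r, h1, _⟩ := hbound ℓ hℓ
      have hr : (0 : ℤ) ≤ (r : ℤ) * ((c : ℤ) - a - 1) :=
        mul_nonneg (Int.ofNat_nonneg r) (le_of_lt he)
      have : (a : ℤ) * ℓ ≤ (a : ℤ) * (c * j * A) := by linarith [h1, hr]
      have := le_of_mul_le_mul_left this (by exact_mod_cast ha : (0 : ℤ) < a)
      exact_mod_cast this
    have hLst : IsLeast (L k) (a * j * C) := by
      refine ⟨hmmem, fun ℓ hℓ => ?_⟩
      obtain ⟨q, r, _, h2⟩ := hbound ℓ hℓ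
      have hq : (0 : ℤ) ≤ (q : ℤ) * ((c : ℤ) - a - 1) :=
        mul_nonneg (Int.ofNat_nonneg q) (le_of_lt he)
      have : (c : ℤ) * (a * j * C) ≤ (c : ℤ) * ℓ := by linarith [h2, hq]
      have := le_of_mul_le_mul_left this (by exact_mod_cast hc : (0 : ℤ) < c)
      exact_mod_cast this
    rw [hG.csSup_eq, hLst.csInf_eq, hτ1, zpow_one, hAq, hCq]
    rw [div_eq_div_iff (by positivity) (by positivity)]
    push_cast
    ring
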